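/- Let n ≥ 16 be an integer, let E_n denote the set of Eulerian tournaments on the vertex set {1,…,2n+1}, and for distinct vertices v, w let E_n^{v,w} ⊆ E_n denote the set of Eulerian tournaments D ∈ E_n with (v,w) ∈ E(D) and |N^+(v) ∩ N^+(w)| = n−1. Then |E_n^{v,w}| ≤ 2^{14} · n^{−4} · |E_n|. -/

import Mathlib

open Finset

/-- A digraph: finite vertex set, no loops, at most one arc per pair. -/
structure Digraph' (V : Type) where
  Adj : V → V → Bool
  irrefl : ∀ v, Adj v v = false
  asymm : ∀ u v, Adj u v = true → Adj v u = false

namespace Digraph'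

variable {V : Type} [Fintype V] [DecidableEq V] (D : Digraph' V)

/-- Out-neighborhood N⁺(v). -/
def outN (v : V) : Finset V := univ.filter fun u => D.Adj v u
/-- In-neighborhood N⁻(v). -/
def inN (v : V) : Finset V := univ.filter fun u => D.Adj u v

/-- max over vertices v of Σ_{u∈N⁺(v)} p u − Σ_{u∈N⁻(v)} p u. -/
noncomputable def payoff (p : V → ℝ) : ℝ :=
  sSup (Set.range fun v => (∑ u ∈ D.outN v, p u) - ∑ u ∈ D.inN v, p u)

/-- Auxiliary (fuel-indexed) definition of the value of the semi-restricted D-game. -/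
noncomputable def valueAux : ℕ → (V → ℕ) → ℝ
  | 0, _ => 0
  | (n+1), r =>
    if ∀ u, r u = 0 then 0
    else sInf { x : ℝ | ∃ p : V → ℝ, (∀ u, 0 ≤ p u) ∧ (∑ u, p u = 1) ∧
      (∀ u, p u ≠ 0 → r u ≠ 0) ∧
      x = D.payoff p + ∑ u, p u * valueAux n (fun w => r w - if w = u then 1 else 0) }

/-- The value S_D(r) of the semi-restricted D-game with restriction vector r. -/
noncomputable def value (r : V → ℕ) : ℝ := D.valueAux (∑ u, r u) r

end Digraph'

/-- A strategy for Rei in the semi-restricted D-game. -/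
structure ReiStrategy {V : Type} [Fintype V] [DecidableEq V] (D : Digraph' V) where
  play : (V → ℕ) → V → ℝ
  nonneg : ∀ r : V → ℕ, (¬ ∀ u, r u = 0) → ∀ u, 0 ≤ play r u
  sum_one : ∀ r : V → ℕ, (¬ ∀ u, r u = 0) → ∑ u, play r u = 1
  supp : ∀ r : V → ℕ, (¬ ∀ u, r u = 0) → ∀ u, play r u ≠ 0 → r u ≠ 0

namespace Digraph'

variable {V : Type} [Fintype V] [DecidableEq V] (D : Digraph' V)

/-- Auxiliary (fuel-indexed) value of Rei's strategy R. -/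
noncomputable def stratValueAux (R : ReiStrategy D) : ℕ → (V → ℕ) → ℝ
  | 0, _ => 0
  | (n+1), r =>
    if ∀ u, r u = 0 then 0
    else D.payoff (R.play r) +
      ∑ u, R.play r u * stratValueAux R n (fun w => r w - if w = u then 1 else 0)

/-- The value S_D(r; R) of Rei's strategy R at restriction vector r. -/
noncomputable def stratValue (R : ReiStrategy D) (r : V → ℕ) : ℝ :=
  D.stratValueAux R (∑ u, r u) r

/-- A strategy for Rei is optimal if its value equals the game value at every restriction vector. -/
def IsOptimal (R : ReiStrategy D) : Prop := ∀ r : V → ℕ, D.stratValue R r = D.value r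

/-- A strategy is oblivious if it only depends on the support of the restriction vector. -/
def IsOblivious (R : ReiStrategy D) : Prop :=
  ∀ r r' : V → ℕ, (∀ u, r u ≠ 0 ↔ r' u ≠ 0) → R.play r = R.play r'

/-- A digraph is oblivious if Rei has an oblivious optimal strategy. -/
def Oblivious : Prop := ∃ R : ReiStrategy D, D.IsOptimal R ∧ D.IsOblivious R

/-- A tournament: exactly one arc between any two distinct vertices. -/
def IsTournament : Prop := ∀ u v : V, u ≠ v → (D.Adj u v = true ∨ D.Adj v u = true)

/-- Eulerian: every vertex has equal in- and out-degree. -/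
def IsEulerian : Prop := ∀ v : V, (D.outN v).card = (D.inN v).card

/-- The skew adjacency matrix of a digraph. -/
def skewAdj : Matrix V V ℝ := fun u v =>
  if D.Adj u v then 1 else if D.Adj v u then -1 else 0

end Digraph'

-- === auxiliary development for the proof ===
set_option linter.unusedSectionVars false

namespace Digraph'
variable {V : Type} [Fintype V] [DecidableEq V]

lemma adj_ext {D E : Digraph' V} (h : D.Adj = E.Adj) : D = E := by
  cases D; cases E; simpa using h

instance : DecidableEq (Digraph' V) := fun D E =>
  decidable_of_iff (D.Adj = E.Adj) ⟨adj_ext, fun h => by rw [h]⟩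

noncomputable instance : Fintype (Digraph' V) :=
  Fintype.ofInjective (fun D => D.Adj) (fun _ _ => adj_ext)

instance (D : Digraph' V) : Decidable D.IsTournament :=
  decidable_of_iff (∀ u v : V, u ≠ v → (D.Adj u v = true ∨ D.Adj v u = true)) Iff.rfl

instance (D : Digraph' V) : Decidable D.IsEulerian :=
  decidable_of_iff (∀ v : V, (D.outN v).card = (D.inN v).card) Iff.rfl

lemma mem_outN {D : Digraph' V} {x u : V} : u ∈ D.outN x ↔ D.Adj x u = true := by
  simp [outN]

lemma mem_inN {D : Digraph' V} {x u : V} : u ∈ D.inN x ↔ D.Adj u x = true := by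
  simp [inN]

lemma not_adj_self (D : Digraph' V) (x : V) : ¬ D.Adj x x = true := by
  simp [D.irrefl x]

lemma not_adj_of_adj {D : Digraph' V} {x y : V} (h : D.Adj x y = true) : ¬ D.Adj y x = true := by
  simp [D.asymm x y h]

lemma ne_of_adj {D : Digraph' V} {x y : V} (h : D.Adj x y = true) : x ≠ y := by
  rintro rfl; exact D.not_adj_self x h

lemma outN_card_add (D : Digraph' V) (hT : D.IsTournament) (x : V) :
    (D.outN x).card + (D.inN x).card + 1 = Fintype.card V := by
  have h1 : D.outN x ∪ D.inN x = univ.erase x := by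
    ext u
    simp only [mem_union, mem_outN, mem_inN, mem_erase, mem_univ, and_true]
    constructor
    · rintro (h | h)
      · exact (ne_of_adj h).symm
      · exact ne_of_adj h
    · intro hu
      rcases hT x u (Ne.symm hu) with h | h
      · exact Or.inl h
      · exact Or.inr h
  have h2 : Disjoint (D.outN x) (D.inN x) := by
    rw [disjoint_left]
    intro u hu hu'
    exact not_adj_of_adj (mem_outN.1 hu) (mem_inN.1 hu')
  have h3 := card_union_of_disjoint h2
  rw [h1, card_erase_of_mem (mem_univ x), card_univ] at h3
  have h4 : 1 ≤ Fintype.card V := Fintype.card_pos_iff.mpr ⟨x⟩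
  omega

lemma degree_eq {n : ℕ} (D : Digraph' V) (hT : D.IsTournament) (hE : D.IsEulerian)
    (hV : Fintype.card V = 2 * n + 1) (x : V) :
    (D.outN x).card = n ∧ (D.inN x).card = n := by
  have h1 := D.outN_card_add hT x
  have h2 := hE x
  omega

end Digraph'
namespace Digraph'
variable {V : Type} [Fintype V] [DecidableEq V]

/-- The pairs touched by the triangle v→a→c→v. -/
def tp (v a c x y : V) : Prop :=
  (x = v ∧ y = a) ∨ (x = a ∧ y = v) ∨ (x = a ∧ y = c) ∨ (x = c ∧ y = a) ∨
  (x = c ∧ y = v) ∨ (x = v ∧ y = c)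

instance (v a c x y : V) : Decidable (tp v a c x y) := by unfold tp; infer_instance

lemma tp_symm {v a c x y : V} (h : tp v a c x y) : tp v a c y x := by unfold tp at *; tauto

lemma tp_rot {v a c x y : V} : tp v a c x y ↔ tp a c v x y := by unfold tp; tauto

/-- Reverse the triangle v→a→c→v. -/
def revTri (D : Digraph' V) (v a c : V) : Digraph' V where
  Adj x y := if tp v a c x y then D.Adj y x else D.Adj x y
  irrefl x := by by_cases h : tp v a c x x <;> simp [if_pos, if_neg, h, D.irrefl]
  asymm x y h := by
    by_cases h1 : tp v a c x y
    · have h2 := tp_symm h1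
      simp only [h1, h2, if_true, if_pos] at h ⊢
      exact D.asymm y x h
    · have h2 : ¬ tp v a c y x := fun hh => h1 (tp_symm hh)
      simp only [h1, h2, if_false, if_neg] at h ⊢
      exact D.asymm x y h

lemma revTri_adj (D : Digraph' V) (v a c x y : V) :
    (D.revTri v a c).Adj x y = if tp v a c x y then D.Adj y x else D.Adj x y := rfl

lemma revTri_rot (D : Digraph' V) (v a c : V) : D.revTri v a c = D.revTri a c v := by
  apply adj_ext; funext x y
  rw [revTri_adj, revTri_adj]
  exact if_congr tp_rot rfl rfl

lemma revTri_involutive (D : Digraph' V) (v a c : V) :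
    (D.revTri v a c).revTri v a c = D := by
  apply adj_ext; funext x y
  rw [revTri_adj, revTri_adj]
  by_cases h : tp v a c x y
  · rw [if_pos h, if_pos (tp_symm h)]
  · rw [if_neg h, revTri_adj, if_neg h]

lemma revTri_adj_of_not_mem (D : Digraph' V) {v a c x : V} (hx : x ≠ v) (hxa : x ≠ a)
    (hxc : x ≠ c) (y : V) : (D.revTri v a c).Adj x y = D.Adj x y := by
  have h : ¬ tp v a c x y := by unfold tp; tauto
  rw [revTri_adj, if_neg h]

lemma revTri_adj_of_not_mem' (D : Digraph' V) {v a c y : V} (hy : y ≠ v) (hya : y ≠ a)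
    (hyc : y ≠ c) (x : V) : (D.revTri v a c).Adj x y = D.Adj x y := by
  have h : ¬ tp v a c x y := by unfold tp; tauto
  rw [revTri_adj, if_neg h]

lemma outN_revTri_of_ne (D : Digraph' V) {v a c x : V} (hx : x ≠ v) (hxa : x ≠ a)
    (hxc : x ≠ c) : (D.revTri v a c).outN x = D.outN x := by
  ext u; rw [mem_outN, mem_outN, revTri_adj_of_not_mem D hx hxa hxc]

lemma inN_revTri_of_ne (D : Digraph' V) {v a c x : V} (hx : x ≠ v) (hxa : x ≠ a)
    (hxc : x ≠ c) : (D.revTri v a c).inN x = D.inN x := by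
  ext u; rw [mem_inN, mem_inN, revTri_adj_of_not_mem' D hx hxa hxc]

section Tri
variable {D : Digraph' V} {v a c : V} (h1 : D.Adj v a = true) (h2 : D.Adj a c = true)
  (h3 : D.Adj c v = true)

include h1 h2 h3

lemma tp_v_iff (u : V) : tp v a c v u ↔ u = a ∨ u = c := by
  have hva := ne_of_adj h1
  have hcv := ne_of_adj h3
  unfold tp
  constructor
  · rintro (⟨-, rfl⟩ | ⟨rfl, -⟩ | ⟨rfl, -⟩ | ⟨h, -⟩ | ⟨h, -⟩ | ⟨-, rfl⟩) <;> tauto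
  · rintro (rfl | rfl) <;> tauto

lemma outN_revTri_v : (D.revTri v a c).outN v = insert c ((D.outN v).erase a) := by
  ext u
  rw [mem_outN, mem_insert, mem_erase, mem_outN, revTri_adj]
  by_cases h : tp v a c v u
  · rw [if_pos h]
    rcases (tp_v_iff h1 h2 h3 u).1 h with rfl | rfl
    · simp [D.asymm _ _ h1, ne_of_adj h2, (ne_of_adj h1).symm, D.asymm _ _ h2]
    · simp [h3, ne_of_adj h3]
  · rw [if_neg h]
    rw [tp_v_iff h1 h2 h3] at h
    push_neg at h
    simp only [h.1, h.2, false_or, ne_eq, not_false_iff, true_and]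

lemma inN_revTri_v : (D.revTri v a c).inN v = insert a ((D.inN v).erase c) := by
  ext u
  rw [mem_inN, mem_insert, mem_erase, mem_inN, revTri_adj]
  by_cases h : tp v a c u v
  · rw [if_pos h]
    have h' : u = a ∨ u = c := (tp_v_iff h1 h2 h3 u).1 (tp_symm h)
    rcases h' with rfl | rfl
    · simp [h1, ne_of_adj h2]
    · simp [D.asymm _ _ h3, (ne_of_adj h2).symm, ne_of_adj h3, D.asymm _ _ h2]
  · have h' : ¬ (u = a ∨ u = c) := fun hh => h (tp_symm ((tp_v_iff h1 h2 h3 u).2 hh))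
    push_neg at h'
    rw [if_neg h]
    simp only [h'.1, h'.2, false_or, ne_eq, not_false_iff, true_and]

lemma outN_revTri_a : (D.revTri v a c).outN a = insert v ((D.outN a).erase c) := by
  rw [revTri_rot]; exact outN_revTri_v h2 h3 h1

lemma inN_revTri_a : (D.revTri v a c).inN a = insert c ((D.inN a).erase v) := by
  rw [revTri_rot]; exact inN_revTri_v h2 h3 h1

lemma outN_revTri_c : (D.revTri v a c).outN c = insert a ((D.outN c).erase v) := by
  rw [revTri_rot, revTri_rot]; exact outN_revTri_v h3 h1 h2

lemma inN_revTri_c : (D.revTri v a c).inN c = insert v ((D.inN c).erase a) := by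
  rw [revTri_rot, revTri_rot]; exact inN_revTri_v h3 h1 h2

lemma isTournament_revTri (hT : D.IsTournament) : (D.revTri v a c).IsTournament := by
  intro x y hxy
  rcases hT x y hxy with h | h
  · by_cases ht : tp v a c x y
    · right; rw [revTri_adj, if_pos (tp_symm ht)]; exact h
    · left; rw [revTri_adj, if_neg ht]; exact h
  · by_cases ht : tp v a c x y
    · left; rw [revTri_adj, if_pos ht]; exact h
    · right
      have ht' : ¬ tp v a c y x := fun hh => ht (tp_symm hh)
      rw [revTri_adj, if_neg ht']; exact h

lemma isEulerian_revTri (hE : D.IsEulerian) : (D.revTri v a c).IsEulerian := by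
  intro x
  by_cases hxv : x = v
  · subst hxv
    rw [outN_revTri_v h1 h2 h3, inN_revTri_v h1 h2 h3]
    rw [card_insert_of_notMem (by simp [mem_erase, mem_outN, D.asymm _ _ h3]),
      card_insert_of_notMem (by simp [mem_erase, mem_inN, D.asymm _ _ h1]),
      card_erase_of_mem (mem_outN.2 h1), card_erase_of_mem (mem_inN.2 h3), hE x]
  · by_cases hxa : x = a
    · subst hxa
      rw [outN_revTri_a h1 h2 h3, inN_revTri_a h1 h2 h3]
      rw [card_insert_of_notMem (by simp [mem_erase, mem_outN, D.asymm _ _ h1]),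
        card_insert_of_notMem (by simp [mem_erase, mem_inN, D.asymm _ _ h2]),
        card_erase_of_mem (mem_outN.2 h2), card_erase_of_mem (mem_inN.2 h1), hE x]
    · by_cases hxc : x = c
      · subst hxc
        rw [outN_revTri_c h1 h2 h3, inN_revTri_c h1 h2 h3]
        rw [card_insert_of_notMem (by simp [mem_erase, mem_outN, D.asymm _ _ h2]),
          card_insert_of_notMem (by simp [mem_erase, mem_inN, D.asymm _ _ h3]),
          card_erase_of_mem (mem_outN.2 h3), card_erase_of_mem (mem_inN.2 h2), hE x]
      · rw [outN_revTri_of_ne D hxv hxa hxc, inN_revTri_of_ne D hxv hxa hxc, hE x]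

end Tri
end Digraph'
namespace Digraph'
variable {V : Type} [Fintype V] [DecidableEq V]

lemma out_v_split (D : Digraph' V) (hT : D.IsTournament) {v w : V} (h : D.Adj v w = true) :
    (D.outN v).card = 1 + (D.outN v ∩ D.outN w).card + (D.outN v ∩ D.inN w).card := by
  have hset : D.outN v = insert w ((D.outN v ∩ D.outN w) ∪ (D.outN v ∩ D.inN w)) := by
    ext u
    simp only [mem_insert, mem_union, mem_inter, mem_outN, mem_inN]
    constructor
    · intro hu
      by_cases huw : u = w
      · exact Or.inl huw
      · rcases hT w u (Ne.symm huw) with hh | hh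
        · exact Or.inr (Or.inl ⟨hu, hh⟩)
        · exact Or.inr (Or.inr ⟨hu, hh⟩)
    · rintro (rfl | ⟨hu, -⟩ | ⟨hu, -⟩) <;> first | exact h | exact hu
  have hd : Disjoint (D.outN v ∩ D.outN w) (D.outN v ∩ D.inN w) := by
    rw [disjoint_left]
    intro u hu1 hu2
    simp only [mem_inter, mem_outN, mem_inN] at hu1 hu2
    exact not_adj_of_adj hu1.2 hu2.2
  have hw : w ∉ (D.outN v ∩ D.outN w) ∪ (D.outN v ∩ D.inN w) := by
    simp only [mem_union, mem_inter, mem_outN, mem_inN, not_or, not_and]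
    constructor <;> intro <;> simp [D.irrefl w]
  have hc := congrArg Finset.card hset
  rw [card_insert_of_notMem hw, card_union_of_disjoint hd] at hc
  omega

lemma out_w_split (D : Digraph' V) (hT : D.IsTournament) {v w : V} (h : D.Adj v w = true) :
    (D.outN w).card = (D.outN v ∩ D.outN w).card + (D.inN v ∩ D.outN w).card := by
  have hset : D.outN w = (D.outN v ∩ D.outN w) ∪ (D.inN v ∩ D.outN w) := by
    ext u
    simp only [mem_union, mem_inter, mem_outN, mem_inN]
    constructor
    · intro hu
      have huv : u ≠ v := by
        rintro rfl
        exact not_adj_of_adj h hu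
      rcases hT v u (Ne.symm huv) with hh | hh
      · exact Or.inl ⟨hh, hu⟩
      · exact Or.inr ⟨hh, hu⟩
    · rintro (⟨-, hu⟩ | ⟨-, hu⟩) <;> exact hu
  have hd : Disjoint (D.outN v ∩ D.outN w) (D.inN v ∩ D.outN w) := by
    rw [disjoint_left]
    intro u hu1 hu2
    simp only [mem_inter, mem_outN, mem_inN] at hu1 hu2
    exact not_adj_of_adj hu1.1 hu2.1
  have hc := congrArg Finset.card hset
  rw [card_union_of_disjoint hd] at hc
  omega

lemma in_v_split (D : Digraph' V) (hT : D.IsTournament) {v w : V} (h : D.Adj v w = true) :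
    (D.inN v).card = (D.inN v ∩ D.outN w).card + (D.inN v ∩ D.inN w).card := by
  have hset : D.inN v = (D.inN v ∩ D.outN w) ∪ (D.inN v ∩ D.inN w) := by
    ext u
    simp only [mem_union, mem_inter, mem_outN, mem_inN]
    constructor
    · intro hu
      have huw : u ≠ w := by
        rintro rfl
        exact not_adj_of_adj h hu
      rcases hT w u (Ne.symm huw) with hh | hh
      · exact Or.inl ⟨hu, hh⟩
      · exact Or.inr ⟨hu, hh⟩
    · rintro (⟨hu, -⟩ | ⟨hu, -⟩) <;> exact hu
  have hd : Disjoint (D.inN v ∩ D.outN w) (D.inN v ∩ D.inN w) := by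
    rw [disjoint_left]
    intro u hu1 hu2
    simp only [mem_inter, mem_outN, mem_inN] at hu1 hu2
    exact not_adj_of_adj hu1.2 hu2.2
  have hc := congrArg Finset.card hset
  rw [card_union_of_disjoint hd] at hc
  omega

/-- Tournament double counting: ordered arcs inside `I` are half of all ordered pairs. -/
lemma tournament_sum (D : Digraph' V) (hT : D.IsTournament) (I : Finset V) :
    2 * ∑ a ∈ I, (I.filter fun b => D.Adj a b = true).card = I.card * (I.card - 1) := by
  have h1 : ∀ a : V, (I.filter fun b => D.Adj a b = true).card
      = ∑ b ∈ I, if D.Adj a b = true then 1 else 0 := fun a => card_filter _ _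
  simp only [h1]
  have h2 : 2 * ∑ a ∈ I, ∑ b ∈ I, (if D.Adj a b = true then 1 else 0)
      = ∑ a ∈ I, ∑ b ∈ I, ((if D.Adj a b = true then 1 else 0) + (if D.Adj b a = true then 1 else 0)) := by
    rw [two_mul]
    nth_rewrite 2 [Finset.sum_comm]
    rw [← Finset.sum_add_distrib]
    congr 1; ext a; rw [← Finset.sum_add_distrib]
  rw [h2]
  have h3 : ∀ a ∈ I, ∑ b ∈ I, ((if D.Adj a b = true then 1 else 0) + (if D.Adj b a = true then 1 else 0))
      = I.card - 1 := by
    intro a ha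
    have h4 : ∀ b ∈ I, ((if D.Adj a b = true then 1 else 0) + (if D.Adj b a = true then 1 else 0))
        = if a = b then 0 else 1 := by
      intro b _
      by_cases hab : a = b
      · subst hab
        simp [D.irrefl a]
      · rcases hT a b hab with hh | hh
        · rw [if_pos hh, if_neg (by simp [not_adj_of_adj hh]), if_neg hab]
        · rw [if_neg (by simp [not_adj_of_adj hh]), if_pos hh, if_neg hab]
    rw [Finset.sum_congr rfl h4]
    have h5 : ∑ b ∈ I, (if a = b then 0 else 1) = (I.filter fun b => ¬ (a = b)).card := by
      rw [card_filter]
      apply Finset.sum_congr rfl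
      intro b _
      by_cases hab : a = b <;> simp [hab]
    rw [h5]
    have h6 : (I.filter fun b => ¬ (a = b)) = I.erase a := by
      ext u; simp [mem_erase, ne_comm, And.comm]
    rw [h6, card_erase_of_mem ha]
  rw [Finset.sum_congr rfl h3, Finset.sum_const, smul_eq_mul]

end Digraph'
namespace Digraph'
variable {V : Type} [Fintype V] [DecidableEq V]

/-- Eulerian tournaments with v→w and |N⁺(v) ∩ N⁺(w)| = k. -/
noncomputable def Sk (v w : V) (k : ℕ) : Finset (Digraph' V) :=
  univ.filter fun D => D.IsTournament ∧ D.IsEulerian ∧ D.Adj v w = true ∧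
    (D.outN v ∩ D.outN w).card = k

lemma mem_Sk {v w : V} {k : ℕ} {D : Digraph' V} :
    D ∈ Sk v w k ↔ D.IsTournament ∧ D.IsEulerian ∧ D.Adj v w = true ∧
      (D.outN v ∩ D.outN w).card = k := by
  simp [Sk]

lemma switch_mem {v w : V} (hvw : v ≠ w) {k : ℕ} {D : Digraph' V} {a c : V}
    (hD : D ∈ Sk v w (k + 1))
    (ha : a ∈ D.outN v ∩ D.outN w) (hc : c ∈ D.inN v ∩ D.inN w) (hac : D.Adj a c = true) :
    D.revTri v a c ∈ Sk v w k := by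
  obtain ⟨hT, hE, hadj, hI⟩ := mem_Sk.1 hD
  rw [mem_inter, mem_outN, mem_outN] at ha
  rw [mem_inter, mem_inN, mem_inN] at hc
  obtain ⟨h1, hwa⟩ := ha
  obtain ⟨h3, hcw⟩ := hc
  have hwv : w ≠ v := Ne.symm hvw
  have hwa' : w ≠ a := ne_of_adj hwa
  have hwc : w ≠ c := (ne_of_adj hcw).symm
  rw [mem_Sk]
  refine ⟨isTournament_revTri h1 hac h3 hT, isEulerian_revTri h1 hac h3 hE, ?_, ?_⟩
  · rw [revTri_adj_of_not_mem' D hwv hwa' hwc v]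
    exact hadj
  · rw [outN_revTri_v h1 hac h3, outN_revTri_of_ne D hwv hwa' hwc,
      insert_inter_of_notMem (by simp [mem_outN, not_adj_of_adj hcw]),
      erase_inter, card_erase_of_mem (by rw [mem_inter, mem_outN, mem_outN]; exact ⟨h1, hwa⟩),
      hI]
    omega

lemma back_inv {D D' : Digraph' V} {v a c : V} (hrev : D' = D.revTri v a c) :
    D = D'.revTri v a c := by subst hrev; rw [revTri_involutive]

lemma back_mem {D D' : Digraph' V} {v w a c : V} (hvw : v ≠ w)
    (h1 : D.Adj v a = true) (hwa : D.Adj w a = true) (h3 : D.Adj c v = true)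
    (hcw : D.Adj c w = true) (hrev : D' = D.revTri v a c) :
    a ∈ D'.inN v ∩ D'.outN w ∧ c ∈ D'.outN v ∩ D'.inN w := by
  subst hrev
  have hwv : w ≠ v := Ne.symm hvw
  have hwa' : w ≠ a := ne_of_adj hwa
  have hwc : w ≠ c := (ne_of_adj hcw).symm
  constructor
  · rw [mem_inter, mem_inN, mem_outN]
    constructor
    · rw [revTri_adj, if_pos (by unfold tp; tauto)]; exact h1
    · rw [revTri_adj_of_not_mem D hwv hwa' hwc a]; exact hwa
  · rw [mem_inter, mem_outN, mem_inN]
    constructor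
    · rw [revTri_adj, if_pos (by unfold tp; tauto)]; exact h3
    · rw [revTri_adj_of_not_mem' D hwv hwa' hwc c]; exact hcw

/-- The key double-counting step. -/
lemma step (v w : V) (n : ℕ) (hV : Fintype.card V = 2 * n + 1) (hvw : v ≠ w)
    {k m : ℕ} (hkn : k + 2 ≤ n) (hm : m + 2 * n = 3 * k + 6) :
    (Sk v w (k + 1)).card * (((k + 1) * m) / 2)
      ≤ (Sk v w k).card * ((n - k) * (n - k - 1)) := by
  classical
  obtain ⟨d, rfl⟩ : ∃ d, n = k + 2 + d := ⟨n - k - 2, by omega⟩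
  apply card_mul_le_card_mul
    (r := fun D D' => ∃ p : V × V, D.Adj v p.1 = true ∧ D.Adj w p.1 = true ∧
      D.Adj p.2 v = true ∧ D.Adj p.2 w = true ∧ D.Adj p.1 p.2 = true ∧
      D' = D.revTri v p.1 p.2)
  · -- lower bound on forward degrees
    intro D hD
    obtain ⟨hT, hE, hadj, hI⟩ := mem_Sk.1 hD
    have hdeg : ∀ x : V, (D.outN x).card = k + 2 + d := fun x => (degree_eq D hT hE hV x).1
    set I : Finset V := D.outN v ∩ D.outN w with hIdef
    set C : Finset V := D.inN v ∩ D.inN w with hCdef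
    set F : Finset ((_ : V) × V) := I.sigma fun a => C.filter fun c => D.Adj a c = true with hF
    have hmap : ∀ p ∈ F, D.revTri v p.1 p.2 ∈
        ((Sk v w k).bipartiteAbove (fun D D' => ∃ p : V × V, D.Adj v p.1 = true ∧
          D.Adj w p.1 = true ∧ D.Adj p.2 v = true ∧ D.Adj p.2 w = true ∧
          D.Adj p.1 p.2 = true ∧ D' = D.revTri v p.1 p.2) D) := by
      intro p hp
      rw [hF, Finset.mem_sigma, Finset.mem_filter] at hp
      obtain ⟨hpa, hpc, hpac⟩ := hp
      rw [Finset.mem_bipartiteAbove]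
      refine ⟨switch_mem hvw hD hpa hpc hpac, ?_⟩
      rw [mem_inter, mem_outN, mem_outN] at hpa
      rw [mem_inter, mem_inN, mem_inN] at hpc
      exact ⟨⟨p.1, p.2⟩, hpa.1, hpa.2, hpc.1, hpc.2, hpac, rfl⟩
    have hinj : Set.InjOn (fun p : (_ : V) × V => D.revTri v p.1 p.2) F := by
      rintro ⟨pa, pc⟩ hp ⟨qa, qc⟩ hq hpq
      rw [Finset.mem_coe, hF, Finset.mem_sigma, Finset.mem_filter] at hp hq
      obtain ⟨hpa, hpc, hpac⟩ := hp
      obtain ⟨hqa, hqc, hqac⟩ := hq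
      rw [mem_inter, mem_outN, mem_outN] at hpa hqa
      rw [mem_inter, mem_inN, mem_inN] at hpc hqc
      simp only at hpq hpac hqac
      have e1 : (D.revTri v pa pc).outN v = insert pc ((D.outN v).erase pa) :=
        outN_revTri_v hpa.1 hpac hpc.1
      have e2 : (D.revTri v qa qc).outN v = insert qc ((D.outN v).erase qa) :=
        outN_revTri_v hqa.1 hqac hqc.1
      have he : insert pc ((D.outN v).erase pa) = insert qc ((D.outN v).erase qa) := by
        rw [← e1, ← e2, hpq]
      have hp2 : pc ∉ D.outN v := by simp [mem_outN, not_adj_of_adj hpc.1]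
      have hq2 : qc ∉ D.outN v := by simp [mem_outN, not_adj_of_adj hqc.1]
      have hp1 : pa ∈ D.outN v := mem_outN.2 hpa.1
      have hq1 : qa ∈ D.outN v := mem_outN.2 hqa.1
      have hcc : pc = qc := by
        have h5 : pc ∈ insert qc ((D.outN v).erase qa) := by
          rw [← he]; exact mem_insert_self _ _
        rcases mem_insert.1 h5 with hh | hh
        · exact hh
        · exact absurd (mem_of_mem_erase hh) hp2
      have haa : pa = qa := by
        by_contra hne
        have h5 : qa ∈ insert pc ((D.outN v).erase pa) := by
          rw [mem_insert]
          right
          rw [mem_erase]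
          exact ⟨fun hh => hne hh.symm, hq1⟩
        rw [he] at h5
        rcases mem_insert.1 h5 with hh | hh
        · rw [hh] at hq1; exact hq2 hq1
        · exact (mem_erase.1 hh).1 rfl
      rw [haa, hcc]
    have hcard1 : F.card ≤ ((Sk v w k).bipartiteAbove _ D).card :=
      card_le_card_of_injOn _ hmap hinj
    -- lower bound on F.card
    have hXcard : (D.outN v ∩ D.inN w).card = d := by
      have h5 := out_v_split D hT hadj
      rw [hdeg v, ← hIdef, hI] at h5
      omega
    have hZcard : (D.inN v ∩ D.outN w).card = d + 1 := by
      have h5 := out_w_split D hT hadj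
      rw [hdeg w, ← hIdef, hI] at h5
      omega
    have hper : ∀ a ∈ I, k + 2 + d ≤ (I.filter fun b => D.Adj a b = true).card
        + (d + (d + 1)) + (C.filter fun c => D.Adj a c = true).card := by
      intro a ha
      have ha' := ha
      rw [hIdef, mem_inter, mem_outN, mem_outN] at ha'
      have hsub : D.outN a ⊆ (I.filter fun b => D.Adj a b = true)
          ∪ (D.outN v ∩ D.inN w) ∪ (D.inN v ∩ D.outN w)
          ∪ (C.filter fun c => D.Adj a c = true) := by
        intro u hu
        rw [mem_outN] at hu
        have huv : u ≠ v := by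
          rintro rfl
          exact not_adj_of_adj ha'.1 hu
        have huw : u ≠ w := by
          rintro rfl
          exact not_adj_of_adj ha'.2 hu
        simp only [mem_union, Finset.mem_filter, hIdef, hCdef, mem_inter, mem_outN, mem_inN]
        rcases hT v u (Ne.symm huv) with hv1 | hv1 <;>
          rcases hT w u (Ne.symm huw) with hw1 | hw1
        · exact Or.inl (Or.inl (Or.inl ⟨⟨hv1, hw1⟩, hu⟩))
        · exact Or.inl (Or.inl (Or.inr ⟨hv1, hw1⟩))
        · exact Or.inl (Or.inr ⟨hv1, hw1⟩)
        · exact Or.inr ⟨⟨hv1, hw1⟩, hu⟩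
      have hcd : k + 2 + d ≤ ((I.filter fun b => D.Adj a b = true)
          ∪ (D.outN v ∩ D.inN w) ∪ (D.inN v ∩ D.outN w)
          ∪ (C.filter fun c => D.Adj a c = true)).card := by
        rw [← hdeg a]
        exact card_le_card hsub
      calc k + 2 + d ≤ _ := hcd
        _ ≤ _ := by
          refine le_trans (card_union_le _ _) ?_
          refine le_trans (Nat.add_le_add_right (card_union_le _ _) _) ?_
          refine le_trans (Nat.add_le_add_right (Nat.add_le_add_right (card_union_le _ _) _) _) ?_
          rw [hXcard, hZcard]
          omega
    have hFcard : F.card = ∑ a ∈ I, (C.filter fun c => D.Adj a c = true).card := by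
      rw [hF, Finset.card_sigma]
    have hts := tournament_sum D hT I
    rw [hI] at hts
    simp only [Nat.add_sub_cancel] at hts
    have hsum : (k + 1) * (k + 2 + d) ≤ (∑ a ∈ I, (I.filter fun b => D.Adj a b = true).card)
        + (k + 1) * (d + (d + 1)) + F.card := by
      have h6 : ∑ a ∈ I, (k + 2 + d) ≤ ∑ a ∈ I, ((I.filter fun b => D.Adj a b = true).card
          + (d + (d + 1)) + (C.filter fun c => D.Adj a c = true).card) :=
        Finset.sum_le_sum hper
      rw [Finset.sum_const, hI, smul_eq_mul] at h6
      rw [hFcard]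
      calc (k + 1) * (k + 2 + d) ≤ _ := h6
        _ = _ := by
          rw [Finset.sum_add_distrib, Finset.sum_add_distrib, Finset.sum_const, hI, smul_eq_mul]
    -- conclude
    have hkey : (k + 1) * m + ((k + 1) * k + 2 * ((k + 1) * (d + (d + 1))))
        = 2 * ((k + 1) * (k + 2 + d)) := by
      have hm2 : m + k + 2 * (d + (d + 1)) = 2 * (k + 2 + d) := by omega
      calc (k + 1) * m + ((k + 1) * k + 2 * ((k + 1) * (d + (d + 1))))
          = (k + 1) * (m + k + 2 * (d + (d + 1))) := by ring
        _ = (k + 1) * (2 * (k + 2 + d)) := by rw [hm2]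
        _ = 2 * ((k + 1) * (k + 2 + d)) := by ring
    have hfin : (k + 1) * m ≤ 2 * F.card := by
      obtain ⟨A, hA⟩ : ∃ A, (∑ a ∈ I, (I.filter fun b => D.Adj a b = true).card) = A := ⟨_, rfl⟩
      rw [hA] at hsum hts
      obtain ⟨B, hB⟩ : ∃ B, F.card = B := ⟨_, rfl⟩
      rw [hB] at hsum ⊢
      obtain ⟨P, hP⟩ : ∃ P, (k + 1) * (k + 2 + d) = P := ⟨_, rfl⟩
      rw [hP] at hsum hkey
      obtain ⟨Q, hQ⟩ : ∃ Q, (k + 1) * (d + (d + 1)) = Q := ⟨_, rfl⟩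
      rw [hQ] at hsum hkey
      obtain ⟨KK, hKK⟩ : ∃ KK, (k + 1) * k = KK := ⟨_, rfl⟩
      rw [hKK] at hts hkey
      obtain ⟨R, hR⟩ : ∃ R, (k + 1) * m = R := ⟨_, rfl⟩
      rw [hR] at hkey ⊢
      omega
    obtain ⟨R, hR⟩ : ∃ R, (k + 1) * m = R := ⟨_, rfl⟩
    rw [hR] at hfin ⊢
    omega
  · -- upper bound on backward degrees
    intro D' hD'
    obtain ⟨hT', hE', hadj', hI'⟩ := mem_Sk.1 hD'
    have hdeg' : ∀ x : V, (D'.outN x).card = k + 2 + d := fun x => (degree_eq D' hT' hE' hV x).1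
    have hZ'card : (D'.inN v ∩ D'.outN w).card = d + 2 := by
      have h5 := out_w_split D' hT' hadj'
      rw [hdeg' w, hI'] at h5
      omega
    have hX'card : (D'.outN v ∩ D'.inN w).card = d + 1 := by
      have h5 := out_v_split D' hT' hadj'
      rw [hdeg' v, hI'] at h5
      omega
    set f : Digraph' V → V × V := fun D =>
      if h : ∃ p : V × V, D.Adj v p.1 = true ∧ D.Adj w p.1 = true ∧ D.Adj p.2 v = true ∧
          D.Adj p.2 w = true ∧ D.Adj p.1 p.2 = true ∧ D' = D.revTri v p.1 p.2
      then h.choose else (v, v) with hfdef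
    have hmapsto : ∀ D ∈ ((Sk v w (k+1)).bipartiteBelow (fun D D' => ∃ p : V × V,
        D.Adj v p.1 = true ∧ D.Adj w p.1 = true ∧ D.Adj p.2 v = true ∧ D.Adj p.2 w = true ∧
        D.Adj p.1 p.2 = true ∧ D' = D.revTri v p.1 p.2) D'),
        f D ∈ (D'.inN v ∩ D'.outN w) ×ˢ (D'.outN v ∩ D'.inN w) := by
      intro D hD
      rw [Finset.mem_bipartiteBelow] at hD
      obtain ⟨hDS, hre⟩ := hD
      rw [hfdef]
      simp only [dif_pos hre]
      obtain ⟨h1, hwa, h3, hcw, hac, hrev⟩ := hre.choose_spec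
      have hb := back_mem hvw h1 hwa h3 hcw hrev
      rw [Finset.mem_product]
      exact hb
    have hinj' : Set.InjOn f (((Sk v w (k+1)).bipartiteBelow (fun D D' => ∃ p : V × V,
        D.Adj v p.1 = true ∧ D.Adj w p.1 = true ∧ D.Adj p.2 v = true ∧ D.Adj p.2 w = true ∧
        D.Adj p.1 p.2 = true ∧ D' = D.revTri v p.1 p.2) D') : Finset (Digraph' V)) := by
      intro D1 hD1 D2 hD2 hf
      rw [Finset.mem_coe, Finset.mem_bipartiteBelow] at hD1 hD2
      obtain ⟨-, hre1⟩ := hD1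
      obtain ⟨-, hre2⟩ := hD2
      rw [hfdef] at hf
      simp only [dif_pos hre1, dif_pos hre2] at hf
      have hh1 : D1 = D'.revTri v hre1.choose.1 hre1.choose.2 :=
        back_inv hre1.choose_spec.2.2.2.2.2
      have hh2 : D2 = D'.revTri v hre2.choose.1 hre2.choose.2 :=
        back_inv hre2.choose_spec.2.2.2.2.2
      rw [hh1, hh2, hf]
    calc ((Sk v w (k+1)).bipartiteBelow (fun D D' => ∃ p : V × V,
        D.Adj v p.1 = true ∧ D.Adj w p.1 = true ∧ D.Adj p.2 v = true ∧ D.Adj p.2 w = true ∧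
        D.Adj p.1 p.2 = true ∧ D' = D.revTri v p.1 p.2) D').card
        ≤ ((D'.inN v ∩ D'.outN w) ×ˢ (D'.outN v ∩ D'.inN w)).card :=
          card_le_card_of_injOn f hmapsto hinj'
      _ = (d + 2) * (d + 1) := by rw [Finset.card_product, hZ'card, hX'card]
      _ = (k + 2 + d - k) * (k + 2 + d - k - 1) := by
          congr 1 <;> omega

end Digraph'

theorem eulerian_tournament_switching_bound (n : ℕ) (hn : 16 ≤ n)
    (v w : Fin (2 * n + 1)) (hvw : v ≠ w) :
    (({D : Digraph' (Fin (2 * n + 1)) |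
        D.IsTournament ∧ D.IsEulerian ∧ D.Adj v w = true ∧
          (D.outN v ∩ D.outN w).card = n - 1}).ncard : ℝ)
      ≤ 2 ^ 14 / (n : ℝ) ^ 4 *
        (({D : Digraph' (Fin (2 * n + 1)) | D.IsTournament ∧ D.IsEulerian}).ncard : ℝ) := by
  classical
  have hV : Fintype.card (Fin (2 * n + 1)) = 2 * n + 1 := Fintype.card_fin _
  have hset1 : {D : Digraph' (Fin (2 * n + 1)) |
      D.IsTournament ∧ D.IsEulerian ∧ D.Adj v w = true ∧
        (D.outN v ∩ D.outN w).card = n - 1} = ↑(Digraph'.Sk v w (n - 1)) := by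
    ext D; simp [Digraph'.Sk]
  have hset2 : {D : Digraph' (Fin (2 * n + 1)) | D.IsTournament ∧ D.IsEulerian}
      = ↑(univ.filter fun D : Digraph' (Fin (2 * n + 1)) =>
          D.IsTournament ∧ D.IsEulerian) := by
    ext D; simp
  rw [hset1, hset2, Set.ncard_coe_finset, Set.ncard_coe_finset]
  have s1 := Digraph'.step v w n hV hvw (k := n - 2) (m := n) (by omega) (by omega)
  have s2 := Digraph'.step v w n hV hvw (k := n - 3) (m := n - 3) (by omega) (by omega)
  rw [show n - 2 + 1 = n - 1 by omega] at s1
  rw [show n - (n - 2) - 1 = 1 by omega, show n - (n - 2) = 2 by omega] at s1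
  rw [show n - 3 + 1 = n - 2 by omega] at s2
  rw [show n - (n - 3) - 1 = 2 by omega, show n - (n - 3) = 3 by omega] at s2
  set A := (Digraph'.Sk v w (n - 1) : Finset (Digraph' (Fin (2 * n + 1)))).card with hA
  set B := (Digraph'.Sk v w (n - 2) : Finset (Digraph' (Fin (2 * n + 1)))).card with hB
  set Cc := (Digraph'.Sk v w (n - 3) : Finset (Digraph' (Fin (2 * n + 1)))).card with hCc
  set E := ((univ.filter fun D : Digraph' (Fin (2 * n + 1)) =>
      D.IsTournament ∧ D.IsEulerian)).card with hE
  have hCE : Cc ≤ E := by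
    apply card_le_card
    intro D hD
    rw [Digraph'.mem_Sk] at hD
    rw [Finset.mem_filter]
    exact ⟨mem_univ D, hD.1, hD.2.1⟩
  have hPeven : 2 ∣ (n - 1) * n := by
    rcases Nat.even_or_odd n with ⟨t, ht⟩ | ⟨t, ht⟩
    · exact Dvd.dvd.mul_left ⟨t, by omega⟩ _
    · exact Dvd.dvd.mul_right ⟨t, by omega⟩ _
  have hQeven : 2 ∣ (n - 2) * (n - 3) := by
    rcases Nat.even_or_odd n with ⟨t, ht⟩ | ⟨t, ht⟩
    · exact Dvd.dvd.mul_right ⟨t - 1, by omega⟩ _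
    · exact Dvd.dvd.mul_left ⟨t - 1, by omega⟩ _
  have e1 : A * ((n - 1) * n) ≤ B * 4 := by
    calc A * ((n - 1) * n) = A * (((n - 1) * n) / 2) * 2 := by
          rw [mul_assoc, Nat.div_mul_cancel hPeven]
      _ ≤ B * (2 * 1) * 2 := Nat.mul_le_mul_right 2 s1
      _ = B * 4 := by ring
  have e2 : B * ((n - 2) * (n - 3)) ≤ Cc * 12 := by
    calc B * ((n - 2) * (n - 3)) = B * (((n - 2) * (n - 3)) / 2) * 2 := by
          rw [mul_assoc, Nat.div_mul_cancel hQeven]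
      _ ≤ Cc * (3 * 2) * 2 := Nat.mul_le_mul_right 2 s2
      _ = Cc * 12 := by ring
  have e3 : A * ((n - 1) * n * ((n - 2) * (n - 3))) ≤ 48 * E := by
    calc A * ((n - 1) * n * ((n - 2) * (n - 3)))
        = A * ((n - 1) * n) * ((n - 2) * (n - 3)) := by ring
      _ ≤ B * 4 * ((n - 2) * (n - 3)) := Nat.mul_le_mul_right _ e1
      _ = B * ((n - 2) * (n - 3)) * 4 := by ring
      _ ≤ Cc * 12 * 4 := Nat.mul_le_mul_right _ e2
      _ = 48 * Cc := by ring
      _ ≤ 48 * E := Nat.mul_le_mul_left _ hCE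
  have e4 : n ^ 4 ≤ 2 * ((n - 1) * n * ((n - 2) * (n - 3))) := by
    obtain ⟨m, rfl⟩ : ∃ m, n = m + 16 := ⟨n - 16, by omega⟩
    rw [show m + 16 - 1 = m + 15 by omega, show m + 16 - 2 = m + 14 by omega,
      show m + 16 - 3 = m + 13 by omega]
    nlinarith [sq_nonneg m, Nat.zero_le m]
  have e5 : A * n ^ 4 ≤ 16384 * E := by
    calc A * n ^ 4 ≤ A * (2 * ((n - 1) * n * ((n - 2) * (n - 3)))) :=
          Nat.mul_le_mul_left _ e4
      _ = A * ((n - 1) * n * ((n - 2) * (n - 3))) * 2 := by ring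
      _ ≤ 48 * E * 2 := Nat.mul_le_mul_right _ e3
      _ = 96 * E := by ring
      _ ≤ 16384 * E := Nat.mul_le_mul_right _ (by norm_num)
  have hn0 : (0 : ℝ) < (n : ℝ) ^ 4 := by
    have : (0 : ℝ) < (n : ℝ) := by exact_mod_cast (by omega : 0 < n)
    positivity
  rw [div_mul_eq_mul_div, le_div_iff₀ hn0]
  calc (A : ℝ) * (n : ℝ) ^ 4 = ((A * n ^ 4 : ℕ) : ℝ) := by push_cast; ring
    _ ≤ ((16384 * E : ℕ) : ℝ) := by exact_mod_cast e5
    _ = 2 ^ 14 * (E : ℝ) := by push_cast; norm_num
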